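/- Let κ be a cardinal, I a set, and V a real vector space with Module.rank ℝ V = κ. Then every function from κ × I to ℕ is separably dominated (i.e., 𝒫(κ, I) holds) if and only if every I-indexed family of norms on V is dominated. -/

import Mathlib

universe u v

/-- `N` is a norm on the real vector space `V`. -/
def IsNorm {V : Type*} [AddCommGroup V] [Module ℝ V] (N : V → ℝ) : Prop :=
  (∀ x, 0 ≤ N x) ∧ (∀ x, N x = 0 ↔ x = 0) ∧
    (∀ (a : ℝ) (x : V), N (a • x) = |a| * N x) ∧
    ∀ x y, N (x + y) ≤ N x + N y

section Aux

variable {J : Type*} {V : Type*} [AddCommGroup V] [Module ℝ V]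

/-- Weighted ℓ¹-style norm with respect to a basis. -/
noncomputable def wNorm (b : Module.Basis J ℝ V) (w : J → ℝ) (x : V) : ℝ :=
  (b.repr x).sum fun j r => |r| * w j

lemma wNorm_basis (b : Module.Basis J ℝ V) (w : J → ℝ) (j : J) :
    wNorm b w (b j) = w j := by
  simp [wNorm, Finsupp.sum_single_index]

lemma isNorm_sum_le {N : V → ℝ} (hN : IsNorm N) {s : Finset J} (g : J → V) :
    N (∑ j ∈ s, g j) ≤ ∑ j ∈ s, N (g j) := by
  classical
  induction s using Finset.cons_induction with
  | empty => simp [(hN.2.1 0).mpr rfl]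
  | cons j s hj ih =>
      rw [Finset.sum_cons, Finset.sum_cons]
      exact (hN.2.2.2 _ _).trans (by linarith)

lemma isNorm_wNorm (b : Module.Basis J ℝ V) (w : J → ℝ) (hw : ∀ j, 1 ≤ w j) :
    IsNorm (wNorm b w) := by
  classical
  have hw0 : ∀ j, 0 < w j := fun j => lt_of_lt_of_le one_pos (hw j)
  have hterm : ∀ (j : J) (r : ℝ), 0 ≤ |r| * w j := fun j r =>
    mul_nonneg (abs_nonneg r) (hw0 j).le
  have hnonneg : ∀ x, 0 ≤ wNorm b w x := by
    intro x
    exact Finset.sum_nonneg fun j _ => hterm j _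
  refine ⟨hnonneg, ?_, ?_, ?_⟩
  · intro x
    constructor
    · intro h
      by_contra hx
      have hrepr : b.repr x ≠ 0 := fun h0 => hx (by
        have := congrArg b.repr.symm h0
        simpa using this)
      obtain ⟨j, hj⟩ := Finsupp.ne_iff.mp hrepr
      have hjs : j ∈ (b.repr x).support := Finsupp.mem_support_iff.mpr (by simpa using hj)
      have : 0 < wNorm b w x := by
        refine Finset.sum_pos' (fun k _ => hterm k _) ⟨j, hjs, ?_⟩
        have : 0 < |b.repr x j| := abs_pos.mpr (by simpa using hj)
        exact mul_pos this (hw0 j)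
      linarith
    · rintro rfl
      simp [wNorm]
  · intro a x
    have h0 : ∀ j : J, |(0:ℝ)| * w j = 0 := by intro j; simp
    unfold wNorm
    rw [map_smul, Finsupp.sum_smul_index' h0, Finsupp.mul_sum]
    refine Finsupp.sum_congr fun j _ => ?_
    rw [smul_eq_mul, abs_mul]; ring
  · intro x y
    unfold wNorm
    rw [map_add]
    have h0 : ∀ j ∈ (b.repr x).support ∪ (b.repr y).support, |(0:ℝ)| * w j = 0 := by
      intro j _; simp
    rw [Finsupp.sum_of_support_subset _ Finsupp.support_add _ h0,
      Finsupp.sum_of_support_subset _ (Finset.subset_union_left) _ h0,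
      Finsupp.sum_of_support_subset _ (Finset.subset_union_right) _ h0,
      ← Finset.sum_add_distrib]
    refine Finset.sum_le_sum fun j _ => ?_
    rw [Finsupp.add_apply, ← add_mul]
    exact mul_le_mul_of_nonneg_right (abs_add_le _ _) (le_trans zero_le_one (hw j))

end Aux

/-- If `V` has dimension `κ`, then `𝒫(κ, I)` holds (every function from `κ × I` to `ℕ`
is separably dominated, `κ` being identified with an index set of that cardinality)
iff every `I`-indexed family of norms on `V` is dominated. -/
theorem stmt13 {κ : Cardinal.{u}} {I : Type v} {V : Type u}
    [AddCommGroup V] [Module ℝ V] (hV : Module.rank ℝ V = κ) :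
    (∀ f : Quotient.out κ × I → ℕ, ∃ (G : Quotient.out κ → ℕ) (H : I → ℕ),
        ∀ p : Quotient.out κ × I, f p ≤ max (G p.1) (H p.2)) ↔
      (∀ N : I → V → ℝ, (∀ i, IsNorm (N i)) →
        ∃ N' : V → ℝ, IsNorm N' ∧ ∀ i, ∃ c : ℝ, 0 < c ∧ ∀ x, N i x ≤ c * N' x) := by
  classical
  obtain ⟨e⟩ : Nonempty ((Module.Basis.ofVectorSpaceIndex ℝ V) ≃ Quotient.out κ) := by
    apply Cardinal.eq.mp
    rw [Cardinal.mk_out, ← hV]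
    exact (Module.Basis.ofVectorSpace ℝ V).mk_eq_rank''
  set b : Module.Basis (Quotient.out κ) ℝ V := (Module.Basis.ofVectorSpace ℝ V).reindex e with hb
  constructor
  · intro hP N hN
    obtain ⟨G, H, hGH⟩ := hP (fun p => ⌈N p.2 (b p.1)⌉₊)
    refine ⟨wNorm b (fun j => (G j : ℝ) + 1), isNorm_wNorm b _ (fun j => by
      have : (0:ℝ) ≤ (G j : ℝ) := Nat.cast_nonneg _
      linarith), ?_⟩
    intro i
    refine ⟨(H i : ℝ) + 1, by positivity, fun x => ?_⟩
    have hx : x = ∑ j ∈ (b.repr x).support, b.repr x j • b j := by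
      conv_lhs => rw [← b.linearCombination_repr x]
      rw [Finsupp.linearCombination_apply, Finsupp.sum]
    calc N i x = N i (∑ j ∈ (b.repr x).support, b.repr x j • b j) := by rw [← hx]
      _ ≤ ∑ j ∈ (b.repr x).support, N i (b.repr x j • b j) := isNorm_sum_le (hN i) _
      _ ≤ ∑ j ∈ (b.repr x).support, |b.repr x j| * (((G j:ℝ)+1) * ((H i:ℝ)+1)) := by
          refine Finset.sum_le_sum fun j _ => ?_
          rw [(hN i).2.2.1]
          refine mul_le_mul_of_nonneg_left ?_ (abs_nonneg _)
          have h1 : N i (b j) ≤ (⌈N i (b j)⌉₊ : ℝ) := Nat.le_ceil _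
          have h2 : (⌈N i (b j)⌉₊ : ℕ) ≤ max (G j) (H i) := hGH (j, i)
          have h2' : ((⌈N i (b j)⌉₊ : ℕ) : ℝ) ≤ ((max (G j) (H i) : ℕ) : ℝ) :=
            Nat.cast_le.mpr h2
          have h3 : ((max (G j) (H i) : ℕ) : ℝ) ≤ ((G j:ℝ)+1) * ((H i:ℝ)+1) := by
            push_cast
            have hg : (0:ℝ) ≤ (G j : ℝ) := Nat.cast_nonneg _
            have hh : (0:ℝ) ≤ (H i : ℝ) := Nat.cast_nonneg _
            exact max_le (by nlinarith) (by nlinarith)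
          linarith
      _ = ((H i:ℝ)+1) * wNorm b (fun j => (G j : ℝ) + 1) x := by
          rw [wNorm, Finsupp.sum, Finset.mul_sum]
          exact Finset.sum_congr rfl fun j _ => by ring
  · intro hD f
    set N : I → V → ℝ := fun i => wNorm b (fun j => (f (j, i) : ℝ) + 1) with hNdef
    have hNnorm : ∀ i, IsNorm (N i) := fun i => isNorm_wNorm b _ (fun j => by
      have : (0:ℝ) ≤ (f (j, i) : ℝ) := Nat.cast_nonneg _
      linarith)
    obtain ⟨N', hN', hc⟩ := hD N hNnorm
    choose c hc0 hcle using hc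
    refine ⟨fun j => ⌈(max (N' (b j)) 1)^2⌉₊, fun i => ⌈(max (c i) 1)^2⌉₊, ?_⟩
    rintro ⟨j, i⟩
    simp only
    have h1 : (f (j, i) : ℝ) + 1 = N i (b j) :=
      (wNorm_basis b (fun j' => (f (j', i) : ℝ) + 1) j).symm
    have h2 : N i (b j) ≤ c i * N' (b j) := hcle i (b j)
    have hdn : 0 ≤ N' (b j) := hN'.1 _
    set a := max (c i) 1 with hadef
    set d := max (N' (b j)) 1 with hddef
    have ha1 : 1 ≤ a := le_max_right _ _
    have hd1 : 1 ≤ d := le_max_right _ _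
    have key : (f (j, i) : ℝ) + 1 ≤ a * d := by
      rw [h1]
      refine h2.trans (mul_le_mul (le_max_left _ _) (le_max_left _ _) hdn ?_)
      linarith
    have had : a * d ≤ max (a^2) (d^2) := by
      rcases le_total a d with h | h
      · exact le_max_of_le_right (by nlinarith)
      · exact le_max_of_le_left (by nlinarith)
    have hceil : max (a^2) (d^2) ≤ ((max (⌈(d^2)⌉₊) (⌈(a^2)⌉₊) : ℕ) : ℝ) := by
      rw [Nat.cast_max]
      exact max_le (le_trans (Nat.le_ceil _) (le_max_right _ _))
        (le_trans (Nat.le_ceil _) (le_max_left _ _))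
    have hfin : (f (j, i) : ℝ) ≤ ((max (⌈(d^2)⌉₊) (⌈(a^2)⌉₊) : ℕ) : ℝ) := by linarith
    exact_mod_cast hfin
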